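/- Let u₁, u₂ : ℝ → ℝ be twice differentiable on [0, ∞), bounded on [0, ∞), satisfy u_i''(x) = 2x·u_i(x) for all x ≥ 0 (i = 1, 2), and u₁(0) = u₂(0). Then u₁(x) = u₂(x) for all x ≥ 0. -/

import Mathlib

open MeasureTheory Filter

/-- uniqueness of bounded solutions of `u'' = 2xu` on `[0,∞)`
with prescribed value at `0` (derivatives taken within `[0,∞)`, so one-sided
at `0`). -/
theorem statement14 (u₁ u₂ u₁' u₂' : ℝ → ℝ)
    (hd₁ : ∀ x ∈ Set.Ici (0 : ℝ), HasDerivWithinAt u₁ (u₁' x) (Set.Ici 0) x)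
    (hd₁' : ∀ x ∈ Set.Ici (0 : ℝ), HasDerivWithinAt u₁' (2 * x * u₁ x) (Set.Ici 0) x)
    (hb₁ : ∃ C : ℝ, ∀ x ∈ Set.Ici (0 : ℝ), |u₁ x| ≤ C)
    (hd₂ : ∀ x ∈ Set.Ici (0 : ℝ), HasDerivWithinAt u₂ (u₂' x) (Set.Ici 0) x)
    (hd₂' : ∀ x ∈ Set.Ici (0 : ℝ), HasDerivWithinAt u₂' (2 * x * u₂ x) (Set.Ici 0) x)
    (hb₂ : ∃ C : ℝ, ∀ x ∈ Set.Ici (0 : ℝ), |u₂ x| ≤ C)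
    (h0 : u₁ 0 = u₂ 0) :
    ∀ x ∈ Set.Ici (0 : ℝ), u₁ x = u₂ x := by
  obtain ⟨C₁, hC₁⟩ := hb₁
  obtain ⟨C₂, hC₂⟩ := hb₂
  set g : ℝ → ℝ := fun x => (u₁ x - u₂ x) ^ 2 with hg
  set g' : ℝ → ℝ := fun x => 2 * (u₁ x - u₂ x) * (u₁' x - u₂' x) with hg'
  set g'' : ℝ → ℝ := fun x =>
    2 * (u₁' x - u₂' x) ^ 2 + 4 * x * (u₁ x - u₂ x) ^ 2 with hg''
  have hint : interior (Set.Ici (0 : ℝ)) = Set.Ioi 0 := interior_Ici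
  have hIoi : Set.Ioi (0 : ℝ) ⊆ Set.Ici 0 := Set.Ioi_subset_Ici le_rfl
  have hdg : ∀ x ∈ Set.Ici (0 : ℝ), HasDerivWithinAt g (g' x) (Set.Ici 0) x := by
    intro x hx
    have hv : HasDerivWithinAt (fun y => u₁ y - u₂ y) (u₁' x - u₂' x) (Set.Ici 0) x :=
      (hd₁ x hx).sub (hd₂ x hx)
    have := hv.pow 2
    simpa [hg', hg, Pi.pow_def, mul_comm, mul_assoc, mul_left_comm] using this
  have hdg' : ∀ x ∈ Set.Ici (0 : ℝ), HasDerivWithinAt g' (g'' x) (Set.Ici 0) x := by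
    intro x hx
    have hv : HasDerivWithinAt (fun y => u₁ y - u₂ y) (u₁' x - u₂' x) (Set.Ici 0) x :=
      (hd₁ x hx).sub (hd₂ x hx)
    have hw : HasDerivWithinAt (fun y => u₁' y - u₂' y)
        (2 * x * u₁ x - 2 * x * u₂ x) (Set.Ici 0) x :=
      (hd₁' x hx).sub (hd₂' x hx)
    have h2v : HasDerivWithinAt (fun y => 2 * (u₁ y - u₂ y)) (2 * (u₁' x - u₂' x))
        (Set.Ici 0) x := hv.const_mul 2
    have hmul := h2v.mul hw
    have heq : g'' x = 2 * (u₁' x - u₂' x) * (u₁' x - u₂' x) +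
        2 * (u₁ x - u₂ x) * (2 * x * u₁ x - 2 * x * u₂ x) := by
      show 2 * (u₁' x - u₂' x) ^ 2 + 4 * x * (u₁ x - u₂ x) ^ 2 = _
      ring
    rw [heq]
    exact hmul
  -- convexity of g on [0,∞)
  have hgc : ContinuousOn g (Set.Ici 0) := fun x hx => (hdg x hx).continuousWithinAt
  have hconv : ConvexOn ℝ (Set.Ici 0) g := by
    apply convexOn_of_hasDerivWithinAt2_nonneg (convex_Ici 0) hgc
      (f' := g') (f'' := g'')
    · intro x hx
      rw [hint] at hx ⊢
      exact (hdg x (hIoi hx)).mono hIoi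
    · intro x hx
      rw [hint] at hx ⊢
      exact (hdg' x (hIoi hx)).mono hIoi
    · intro x hx
      rw [hint] at hx
      have hx0 : (0:ℝ) ≤ x := le_of_lt hx
      have : (0:ℝ) ≤ 4 * x * (u₁ x - u₂ x) ^ 2 := by positivity
      have h2 : (0:ℝ) ≤ 2 * (u₁' x - u₂' x) ^ 2 := by positivity
      simp only [hg'']
      linarith
  -- bound on g
  set M : ℝ := (C₁ + C₂) ^ 2 with hM
  have hgM : ∀ x ∈ Set.Ici (0 : ℝ), g x ≤ M := by
    intro x hx
    have h1 := hC₁ x hx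
    have h2 := hC₂ x hx
    have habs : |u₁ x - u₂ x| ≤ C₁ + C₂ := by
      calc |u₁ x - u₂ x| ≤ |u₁ x| + |u₂ x| := abs_sub _ _
        _ ≤ C₁ + C₂ := add_le_add h1 h2
    have := sq_le_sq' (neg_le_of_abs_le habs |>.trans_eq rfl |> fun h => h) (le_of_abs_le habs)
    calc g x = (u₁ x - u₂ x) ^ 2 := rfl
      _ ≤ (C₁ + C₂) ^ 2 := by
          have := abs_le.mp habs
          nlinarith [this.1, this.2]
  have hM0 : 0 ≤ M := le_trans (sq_nonneg _) (hgM 0 Set.self_mem_Ici)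
  have hg0 : g 0 = 0 := by simp [hg, h0]
  -- main: g x = 0 for all x ≥ 0
  intro x hx
  by_contra hne
  have hgx : 0 < g x := by
    have : u₁ x - u₂ x ≠ 0 := sub_ne_zero.mpr hne
    positivity
  have hxpos : 0 < x := by
    rcases eq_or_lt_of_le (Set.mem_Ici.mp hx : (0:ℝ) ≤ x) with h | h
    · exact absurd (h ▸ h0) hne
    · exact h
  have hgxM : g x ≤ M := hgM x hx
  -- choose y = x * (M+1) / g x
  set y : ℝ := x * (M + 1) / g x with hy
  have hM1 : (0:ℝ) < M + 1 := by linarith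
  have hypos : 0 < y := by positivity
  have hxy : x ≤ y := by
    rw [hy, le_div_iff₀ hgx]
    nlinarith
  have ht : x / y ∈ Set.Icc (0:ℝ) 1 := by
    constructor
    · positivity
    · exact div_le_one_of_le₀ hxy (le_of_lt hypos)
  have hcomb : g x ≤ (1 - x / y) * g 0 + (x / y) * g y := by
    have h01 : (0:ℝ) ≤ 1 - x / y := by linarith [ht.2]
    have h02 : (0:ℝ) ≤ x / y := ht.1
    have hsum : (1 - x / y) + x / y = 1 := by ring
    have := hconv.2 (Set.self_mem_Ici) (le_of_lt hypos : (0:ℝ) ≤ y) h01 h02 hsum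
    have hpt : (1 - x / y) • (0:ℝ) + (x / y) • y = x := by
      simp only [smul_eq_mul]
      field_simp [hypos.ne']
      ring
    rw [hpt] at this
    simpa using this
  rw [hg0] at hcomb
  have hgy : g y ≤ M := hgM y (le_of_lt hypos)
  have hxyval : x / y = g x / (M + 1) := by
    rw [hy]
    field_simp
  have : g x ≤ g x / (M + 1) * M := by
    calc g x ≤ (1 - x / y) * 0 + x / y * g y := hcomb
      _ = x / y * g y := by ring
      _ ≤ x / y * M := by
          apply mul_le_mul_of_nonneg_left hgy ht.1
      _ = g x / (M + 1) * M := by rw [hxyval]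
  have hlt : g x / (M + 1) * M < g x := by
    rw [div_mul_eq_mul_div, div_lt_iff₀ hM1]
    nlinarith
  linarith
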